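/- arXiv:1912.11590 — 4 statements merged into one kernel-verified Lean document; each statement's English description precedes it below -/
import Mathlib

section
/- Let X be a real Hilbert space, and let A and B be bounded linear operators on X, with B compact. Suppose there is a constant c₁ > 0 such that ⟨(A + B)x, x⟩ ≥ c₁‖x‖² for all x ∈ X, and suppose ⟨Ax, x⟩ > 0 for all x ∈ X with x ≠ 0. Then there exists a constant c₂ > 0 such that ⟨Ax, x⟩ ≥ c₂‖x‖² for all x ∈ X. (Lemma 4.1 of the paper; the paper states it for operators A, B : X → X′ into the dual space, which are identified with operators on X via the Riesz isometry, the dual pairing becoming the inner product.) -/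
open RealInnerProductSpace Filter Topology

/-- Lemma 4.1: if `A + B` is coercive with `B` compact and `A` is strictly positive,
then `A` is coercive. -/
theorem stmt_0 {X : Type*} [NormedAddCommGroup X] [InnerProductSpace ℝ X] [CompleteSpace X]
    (A B : X →L[ℝ] X) (hB : IsCompactOperator B)
    (c₁ : ℝ) (hc₁ : 0 < c₁)
    (hAB : ∀ x : X, c₁ * ‖x‖ ^ 2 ≤ ⟪(A + B) x, x⟫)
    (hA : ∀ x : X, x ≠ 0 → 0 < ⟪A x, x⟫) :
    ∃ c₂ : ℝ, 0 < c₂ ∧ ∀ x : X, c₂ * ‖x‖ ^ 2 ≤ ⟪A x, x⟫ := by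
  -- nonnegativity of the A-form
  have hpos : ∀ z : X, 0 ≤ ⟪A z, z⟫ := by
    intro z
    rcases eq_or_ne z 0 with rfl | hz
    · simp
    · exact (hA z hz).le
  by_contra h
  push_neg at h
  -- build unit vectors u n with ⟪A (u n), u n⟫ < 1/(n+1)
  have hsel : ∀ n : ℕ, ∃ u : X, ‖u‖ = 1 ∧ ⟪A u, u⟫ < 1 / (n + 1) := by
    intro n
    obtain ⟨x, hx⟩ := h (1 / (n + 1)) (by positivity)
    have hx0 : x ≠ 0 := by
      rintro rfl
      simp at hx
    refine ⟨‖x‖⁻¹ • x, ?_, ?_⟩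
    · have hnx : (0:ℝ) < ‖x‖ := norm_pos_iff.mpr hx0
      rw [norm_smul, norm_inv, norm_norm]
      field_simp
    · have hnx : (0:ℝ) < ‖x‖ := norm_pos_iff.mpr hx0
      rw [map_smul, inner_smul_left, inner_smul_right]
      have : ⟪A x, x⟫ < 1 / (n + 1) * ‖x‖ ^ 2 := hx
      calc ‖x‖⁻¹ * (‖x‖⁻¹ * ⟪A x, x⟫) = ⟪A x, x⟫ / ‖x‖ ^ 2 := by ring
        _ < (1 / (n + 1) * ‖x‖ ^ 2) / ‖x‖ ^ 2 := by gcongr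
        _ = 1 / (n + 1) := by field_simp
  choose u hu1 hu2 using hsel
  -- the quadratic form of A satisfies a parallelogram-type identity, giving:
  have hApar : ∀ x y : X, ⟪A (x - y), x - y⟫ ≤ 2 * (⟪A x, x⟫ + ⟪A y, y⟫) := by
    intro x y
    have hid : ⟪A (x - y), x - y⟫ + ⟪A (x + y), x + y⟫
        = 2 * (⟪A x, x⟫ + ⟪A y, y⟫) := by
      simp only [map_sub, map_add, inner_sub_left, inner_sub_right, inner_add_left,
        inner_add_right]
      ring
    nlinarith [hpos (x + y)]
  -- extract a subsequence along which B (u n) converges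
  obtain ⟨K, hK, hKsub⟩ := hB.image_closedBall_subset_compact (𝕜₁ := ℝ) (f := (B : X →ₗ[ℝ] X)) 1
  have hmem : ∀ n, B (u n) ∈ K := by
    intro n
    exact hKsub ⟨u n, by simp [Metric.mem_closedBall, hu1 n], rfl⟩
  obtain ⟨y, -, φ, hφ, hBy⟩ := hK.tendsto_subseq hmem
  -- the key inequality
  have key : ∀ i j : ℕ, c₁ * ‖u i - u j‖ ^ 2 ≤
      2 * (⟪A (u i), u i⟫ + ⟪A (u j), u j⟫) +
      2 * (‖B (u i) - y‖ + ‖B (u j) - y‖) := by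
    intro i j
    set d := u i - u j with hd
    have hdn : ‖d‖ ≤ 2 := by
      calc ‖d‖ ≤ ‖u i‖ + ‖u j‖ := norm_sub_le _ _
        _ = 2 := by rw [hu1, hu1]; norm_num
    have h1 : c₁ * ‖d‖ ^ 2 ≤ ⟪A d, d⟫ + ⟪B d, d⟫ := by
      have := hAB d
      simpa [ContinuousLinearMap.add_apply, inner_add_left] using this
    have h2 : ⟪A d, d⟫ ≤ 2 * (⟪A (u i), u i⟫ + ⟪A (u j), u j⟫) := hApar _ _
    have h3 : ⟪B d, d⟫ ≤ 2 * (‖B (u i) - y‖ + ‖B (u j) - y‖) := by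
      have e1 : ⟪B d, d⟫ = ⟪B (u i) - y, d⟫ - ⟪B (u j) - y, d⟫ := by
        rw [hd, map_sub]
        simp [inner_sub_left]
      have e2 : ⟪B (u i) - y, d⟫ ≤ ‖B (u i) - y‖ * 2 := by
        calc ⟪B (u i) - y, d⟫ ≤ ‖B (u i) - y‖ * ‖d‖ := real_inner_le_norm _ _
          _ ≤ ‖B (u i) - y‖ * 2 := by
              exact mul_le_mul_of_nonneg_left hdn (norm_nonneg _)
      have e3 : -⟪B (u j) - y, d⟫ ≤ ‖B (u j) - y‖ * 2 := by
        calc -⟪B (u j) - y, d⟫ ≤ ‖B (u j) - y‖ * ‖d‖ := by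
              have := real_inner_le_norm (B (u j) - y) (-d)
              simpa [inner_neg_right] using this
          _ ≤ ‖B (u j) - y‖ * 2 := by
              exact mul_le_mul_of_nonneg_left hdn (norm_nonneg _)
      linarith [e2, e3]
    linarith
  -- the subsequence is Cauchy
  have hC : CauchySeq (fun n => u (φ n)) := by
    rw [Metric.cauchySeq_iff]
    intro ε hε
    have hδ : (0:ℝ) < c₁ * ε ^ 2 / 16 := by positivity
    -- ⟪A (u (φ n)), u (φ n)⟫ → 0
    have ha0 : Tendsto (fun n => ⟪A (u (φ n)), u (φ n)⟫) atTop (𝓝 0) := by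
      apply squeeze_zero (fun n => hpos _) (fun n => (hu2 (φ n)).le.trans ?_)
        tendsto_one_div_add_atTop_nhds_zero_nat
      gcongr
      exact hφ.id_le n
    have hb0 : Tendsto (fun n => ‖B (u (φ n)) - y‖) atTop (𝓝 0) := by
      simpa using (tendsto_sub_nhds_zero_iff.mpr hBy).norm
    have h1 := (ha0.eventually (gt_mem_nhds hδ)).and (hb0.eventually (gt_mem_nhds hδ))
    obtain ⟨N, hN⟩ := h1.exists_forall_of_atTop
    refine ⟨N, fun m hm n hn => ?_⟩
    obtain ⟨ham, hbm⟩ := hN m hm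
    obtain ⟨han, hbn⟩ := hN n hn
    rw [dist_eq_norm]
    have hkey := key (φ m) (φ n)
    have : c₁ * ‖u (φ m) - u (φ n)‖ ^ 2 < c₁ * ε ^ 2 := by
      calc c₁ * ‖u (φ m) - u (φ n)‖ ^ 2 ≤ _ := hkey
        _ < c₁ * ε ^ 2 := by nlinarith
    have h2 : ‖u (φ m) - u (φ n)‖ ^ 2 < ε ^ 2 := lt_of_mul_lt_mul_left this hc₁.le
    nlinarith [norm_nonneg (u (φ m) - u (φ n)), hε]
  -- limit point
  obtain ⟨x, hx⟩ := cauchySeq_tendsto_of_complete hC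
  have hx1 : ‖x‖ = 1 := by
    have := (continuous_norm.tendsto x).comp hx
    have h2 : Tendsto (fun n => ‖u (φ n)‖) atTop (𝓝 1) := by
      simp only [hu1]
      exact tendsto_const_nhds
    exact tendsto_nhds_unique ((continuous_norm.tendsto x).comp hx) h2
  have hx0 : x ≠ 0 := by
    intro h0
    rw [h0, norm_zero] at hx1
    norm_num at hx1
  have t1 : Tendsto (fun n => ⟪A (u (φ n)), u (φ n)⟫) atTop (𝓝 ⟪A x, x⟫) :=
    ((A.continuous.tendsto x).comp hx).inner hx
  have t2 : Tendsto (fun n => ⟪A (u (φ n)), u (φ n)⟫) atTop (𝓝 0) := by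
    apply squeeze_zero (fun n => hpos _) (fun n => (hu2 (φ n)).le.trans ?_)
      tendsto_one_div_add_atTop_nhds_zero_nat
    gcongr
    exact hφ.id_le n
  have : ⟪A x, x⟫ = 0 := tendsto_nhds_unique t1 t2
  exact absurd this (ne_of_gt (hA x hx0))
end

section
/- Let H₁, H₂ and X be real Hilbert spaces, and let A₁ : H₁ → X and A₂ : H₂ → X be bounded linear operators satisfying A₁ ∘ A₁* = A₂ ∘ A₂*, where Aⱼ* denotes the Hilbert-space adjoint of Aⱼ. Then the ranges of A₁ and A₂ coincide: range(A₁) = range(A₂) as subsets of X. (Lemma 5.2 of the paper, quoted from Lemma 3.5 of Gebauer.) -/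
open RealInnerProductSpace

/-- One inclusion: if `B₁ ∘ B₁* = B₂ ∘ B₂*` then `range B₂ ⊆ range B₁`. -/
lemma aux_range_subset {H₁ H₂ X : Type*}
    [NormedAddCommGroup H₁] [InnerProductSpace ℝ H₁] [CompleteSpace H₁]
    [NormedAddCommGroup H₂] [InnerProductSpace ℝ H₂] [CompleteSpace H₂]
    [NormedAddCommGroup X] [InnerProductSpace ℝ X] [CompleteSpace X]
    (B₁ : H₁ →L[ℝ] X) (B₂ : H₂ →L[ℝ] X)
    (h : B₁.comp (ContinuousLinearMap.adjoint B₁)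
       = B₂.comp (ContinuousLinearMap.adjoint B₂)) :
    Set.range B₂ ⊆ Set.range B₁ := by
  set B₁s := ContinuousLinearMap.adjoint B₁ with hB₁s
  set B₂s := ContinuousLinearMap.adjoint B₂ with hB₂s
  have hcomp : ∀ z : X, B₁ (B₁s z) = B₂ (B₂s z) := by
    intro z
    have := congrArg (fun T : X →L[ℝ] X => T z) h
    simpa using this
  have hnormeq : ∀ z : X, ‖B₁s z‖ = ‖B₂s z‖ := by
    intro z
    have e1 : (inner ℝ (B₁s z) (B₁s z) : ℝ) = inner ℝ z (B₁ (B₁s z)) :=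
      ContinuousLinearMap.adjoint_inner_left B₁ (B₁s z) z
    have e2 : (inner ℝ (B₂s z) (B₂s z) : ℝ) = inner ℝ z (B₂ (B₂s z)) :=
      ContinuousLinearMap.adjoint_inner_left B₂ (B₂s z) z
    have hinner : (inner ℝ (B₁s z) (B₁s z) : ℝ) = inner ℝ (B₂s z) (B₂s z) := by
      rw [e1, e2, hcomp]
    have h1 : ‖B₁s z‖ ^ 2 = ‖B₂s z‖ ^ 2 := by
      rw [← real_inner_self_eq_norm_sq, ← real_inner_self_eq_norm_sq, hinner]
    nlinarith [norm_nonneg (B₁s z), norm_nonneg (B₂s z)]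
  have hdist : ∀ x y : X, dist (B₁s x) (B₁s y) = dist (B₂s x) (B₂s y) := by
    intro x y
    rw [dist_eq_norm, dist_eq_norm, ← map_sub, ← map_sub, hnormeq]
  rintro _ ⟨u, rfl⟩
  set K := (LinearMap.range (B₂s : X →ₗ[ℝ] H₂)).topologicalClosure with hK
  haveI : CompleteSpace K :=
    (Submodule.isClosed_topologicalClosure _).completeSpace_coe
  set p : H₂ := (K.orthogonalProjectionOnto u : H₂) with hp
  have hup : u - p ∈ Kᗮ := K.sub_starProjection_mem_orthogonal u
  have hker : B₂ (u - p) = 0 := by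
    have hinner : ∀ x : X, (inner ℝ (B₂ (u - p)) x : ℝ) = 0 := by
      intro x
      have e : (inner ℝ (u - p) (B₂s x) : ℝ) = inner ℝ (B₂ (u - p)) x :=
        ContinuousLinearMap.adjoint_inner_right B₂ (u - p) x
      rw [← e, real_inner_comm]
      exact hup (B₂s x)
        (Submodule.le_topologicalClosure _ (LinearMap.mem_range_self _ x))
    exact inner_self_eq_zero.mp (hinner (B₂ (u - p)))
  have hB₂u : B₂ u = B₂ p := by
    have h0 : B₂ u - B₂ p = 0 := by rw [← map_sub]; exact hker
    exact sub_eq_zero.mp h0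
  -- p lies in the closure of range B₂s: pick an approximating sequence
  have hpK : p ∈ closure (Set.range B₂s) := by
    have hmem : p ∈ (K : Set H₂) := (K.orthogonalProjectionOnto u).2
    rw [hK, Submodule.topologicalClosure_coe] at hmem
    simpa [LinearMap.coe_range] using hmem
  obtain ⟨s, hs, hlim⟩ := mem_closure_iff_seq_limit.mp hpK
  choose x hx using hs
  have hx2 : ∀ n, B₂s (x n) = s n := hx
  have hlim2 : Filter.Tendsto (fun n => B₂s (x n)) Filter.atTop (nhds p) := by
    simpa [hx2] using hlim
  -- `B₁s (x n)` is Cauchy since distances agree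
  have hcauchy : CauchySeq (fun n => B₁s (x n)) := by
    have hc2 : CauchySeq (fun n => B₂s (x n)) := hlim2.cauchySeq
    rw [Metric.cauchySeq_iff] at hc2 ⊢
    intro ε hε
    obtain ⟨N, hN⟩ := hc2 ε hε
    exact ⟨N, fun m hm n hn => by rw [hdist]; exact hN m hm n hn⟩
  obtain ⟨v, hv⟩ := cauchySeq_tendsto_of_complete hcauchy
  refine ⟨v, ?_⟩
  have t1 : Filter.Tendsto (fun n => B₁ (B₁s (x n))) Filter.atTop (nhds (B₁ v)) :=
    (B₁.continuous.tendsto v).comp hv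
  have t2 : Filter.Tendsto (fun n => B₂ (B₂s (x n))) Filter.atTop (nhds (B₂ p)) :=
    (B₂.continuous.tendsto p).comp hlim2
  have t1' : Filter.Tendsto (fun n => B₂ (B₂s (x n))) Filter.atTop (nhds (B₁ v)) := by
    simpa [hcomp] using t1
  have : B₁ v = B₂ p := tendsto_nhds_unique t1' t2
  rw [this, ← hB₂u]

/-- Lemma 5.2 (Lemma 3.5 of Gebauer): if `A₁ ∘ A₁* = A₂ ∘ A₂*`, then the ranges of
`A₁` and `A₂` coincide. -/
theorem stmt_3 {H₁ H₂ X : Type*}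
    [NormedAddCommGroup H₁] [InnerProductSpace ℝ H₁] [CompleteSpace H₁]
    [NormedAddCommGroup H₂] [InnerProductSpace ℝ H₂] [CompleteSpace H₂]
    [NormedAddCommGroup X] [InnerProductSpace ℝ X] [CompleteSpace X]
    (A₁ : H₁ →L[ℝ] X) (A₂ : H₂ →L[ℝ] X)
    (h : A₁.comp (ContinuousLinearMap.adjoint A₁)
       = A₂.comp (ContinuousLinearMap.adjoint A₂)) :
    Set.range A₁ = Set.range A₂ := by
  exact Set.Subset.antisymm (aux_range_subset A₂ A₁ h.symm) (aux_range_subset A₁ A₂ h)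
end

section
/- Let H and K be real Hilbert spaces, let A : K → H be a bounded linear operator, and let F : K → K be a bounded self-adjoint operator that is coercive, i.e. there is c > 0 with ⟨Fψ, ψ⟩ ≥ c‖ψ‖² for all ψ ∈ K. Let S : H → H be any bounded self-adjoint operator with ⟨Sx, x⟩ ≥ 0 for all x ∈ H and S ∘ S = A ∘ F ∘ A*. Then range(S) = range(A) as subsets of H. (Abstract core of Lemma 5.4 (Theorem 3.6) of the paper: the range of the square root of the modified Neumann-to-Dirichlet operator Ñ = L′ℱ(L′)* coincides with the range of L′.) -/
open RealInnerProductSpace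

open ContinuousLinearMap in
/-- Douglas-type lemma: if `‖B* x‖ ≤ C ‖A* x‖` for all `x`, then `range B ⊆ range A`. -/
lemma range_subset_of_adjoint_norm_le {H K : Type*}
    [NormedAddCommGroup H] [InnerProductSpace ℝ H] [CompleteSpace H]
    [NormedAddCommGroup K] [InnerProductSpace ℝ K] [CompleteSpace K]
    {K₂ : Type*} [NormedAddCommGroup K₂] [InnerProductSpace ℝ K₂] [CompleteSpace K₂]
    (A : K →L[ℝ] H) (B : K₂ →L[ℝ] H) (C : ℝ)
    (h : ∀ x : H, ‖adjoint B x‖ ≤ C * ‖adjoint A x‖) :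
    Set.range B ⊆ Set.range A := by
  rintro _ ⟨u, rfl⟩
  set T : H →ₗ[ℝ] K := (adjoint A : H →L[ℝ] K).toLinearMap with hT
  set φ : H →ₗ[ℝ] ℝ :=
    { toFun := fun w => ⟪adjoint B w, u⟫
      map_add' := by intro a b; simp [inner_add_left]
      map_smul' := by intro r a; simp [inner_smul_left] } with hφ
  have hker : LinearMap.ker T ≤ LinearMap.ker φ := by
    intro w hw
    have hw' : adjoint A w = 0 := hw
    have h0 : ‖adjoint B w‖ ≤ 0 := by simpa [hw'] using h w
    have hb0 : adjoint B w = 0 := by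
      have := norm_nonneg (adjoint B w)
      exact norm_le_zero_iff.mp h0
    simp [φ, hb0]
  let e := LinearMap.quotKerEquivRange T
  let f₀ : LinearMap.range T →ₗ[ℝ] ℝ :=
    ((LinearMap.ker T).liftQ φ hker) ∘ₗ e.symm.toLinearMap
  have hf₀ : ∀ w : H, f₀ ⟨T w, LinearMap.mem_range_self T w⟩ = ⟪adjoint B w, u⟫ := by
    intro w
    simp only [f₀, LinearMap.coe_comp, Function.comp_apply, LinearEquiv.coe_coe]
    rw [show e.symm ⟨T w, LinearMap.mem_range_self T w⟩ = (LinearMap.ker T).mkQ w from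
      LinearMap.quotKerEquivRange_symm_apply_image T w _]
    simp [φ]
  have hf₀bound : ∀ m : LinearMap.range T, ‖f₀ m‖ ≤ (‖u‖ * C) * ‖m‖ := by
    rintro ⟨m, w, rfl⟩
    rw [hf₀ w]
    calc ‖⟪adjoint B w, u⟫‖ ≤ ‖adjoint B w‖ * ‖u‖ := norm_inner_le_norm _ _
      _ ≤ (C * ‖adjoint A w‖) * ‖u‖ := by
          have := h w
          have hu : (0:ℝ) ≤ ‖u‖ := norm_nonneg _
          nlinarith [norm_nonneg (adjoint B w)]
      _ = (‖u‖ * C) * ‖(⟨T w, LinearMap.mem_range_self T w⟩ : LinearMap.range T)‖ := by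
          have hn : ‖(⟨T w, LinearMap.mem_range_self T w⟩ : LinearMap.range T)‖
              = ‖ContinuousLinearMap.adjoint A w‖ := rfl
          rw [hn]; ring
  let f : LinearMap.range T →L[ℝ] ℝ := f₀.mkContinuous (‖u‖ * C) hf₀bound
  obtain ⟨g, hg, -⟩ := exists_extension_norm_eq (LinearMap.range T) f
  obtain ⟨z, hz⟩ := (InnerProductSpace.toDual ℝ K).surjective g
  refine ⟨z, ?_⟩
  apply ext_inner_right ℝ
  intro w
  have h1 : ⟪A z, w⟫ = ⟪z, adjoint A w⟫ := (adjoint_inner_right A z w).symm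
  have h2 : ⟪z, adjoint A w⟫ = g (adjoint A w) := by
    rw [← hz]; rfl
  have h3 : g (adjoint A w) = f ⟨T w, LinearMap.mem_range_self T w⟩ :=
    hg ⟨T w, LinearMap.mem_range_self T w⟩
  have h4 : f ⟨T w, LinearMap.mem_range_self T w⟩ = ⟪adjoint B w, u⟫ := hf₀ w
  have h5 : ⟪adjoint B w, u⟫ = ⟪w, B u⟫ := adjoint_inner_left B u w
  rw [h1, h2, h3, h4, h5, real_inner_comm]

/-- Abstract core of Lemma 5.4: if `S` is a bounded self-adjoint nonnegative square root
of `A ∘ F ∘ A*` with `F` bounded self-adjoint coercive, then `range S = range A`. -/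
theorem stmt_5 {H K : Type*}
    [NormedAddCommGroup H] [InnerProductSpace ℝ H] [CompleteSpace H]
    [NormedAddCommGroup K] [InnerProductSpace ℝ K] [CompleteSpace K]
    (A : K →L[ℝ] H)
    (F : K →L[ℝ] K)
    (hF_sa : ∀ x y : K, ⟪F x, y⟫ = ⟪x, F y⟫)
    (c : ℝ) (hc : 0 < c)
    (hF_coercive : ∀ ψ : K, c * ‖ψ‖ ^ 2 ≤ ⟪F ψ, ψ⟫)
    (S : H →L[ℝ] H)
    (hS_sa : ∀ x y : H, ⟪S x, y⟫ = ⟪x, S y⟫)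
    (hS_pos : ∀ x : H, 0 ≤ ⟪S x, x⟫)
    (hSS : S.comp S = A.comp (F.comp (ContinuousLinearMap.adjoint A))) :
    Set.range S = Set.range A := by
  have hSym : (S : H →ₗ[ℝ] H).IsSymmetric := fun x y => hS_sa x y
  have hSadj : ContinuousLinearMap.adjoint S = S := by
    have := (ContinuousLinearMap.isSelfAdjoint_iff_isSymmetric (A := S)).mpr hSym
    rwa [IsSelfAdjoint, ContinuousLinearMap.star_eq_adjoint] at this
  have key : ∀ x : H, ‖S x‖ ^ 2 =
      ⟪F (ContinuousLinearMap.adjoint A x), ContinuousLinearMap.adjoint A x⟫ := by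
    intro x
    have happ : S (S x) = A (F (ContinuousLinearMap.adjoint A x)) := by
      have := congrArg (fun T : H →L[ℝ] H => T x) hSS
      simpa using this
    calc ‖S x‖ ^ 2 = ⟪S x, S x⟫ := (real_inner_self_eq_norm_sq _).symm
      _ = ⟪S (S x), x⟫ := (hS_sa (S x) x).symm
      _ = ⟪A (F (ContinuousLinearMap.adjoint A x)), x⟫ := by rw [happ]
      _ = ⟪F (ContinuousLinearMap.adjoint A x), ContinuousLinearMap.adjoint A x⟫ := by
          rw [← ContinuousLinearMap.adjoint_inner_right]
  -- lower bound:  c ‖A* x‖² ≤ ‖S x‖²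
  have hlow : ∀ x : H, c * ‖ContinuousLinearMap.adjoint A x‖ ^ 2 ≤ ‖S x‖ ^ 2 := by
    intro x
    rw [key x]
    exact hF_coercive _
  -- upper bound : ‖S x‖² ≤ ‖F‖ ‖A* x‖²
  have hupp : ∀ x : H, ‖S x‖ ^ 2 ≤ ‖F‖ * ‖ContinuousLinearMap.adjoint A x‖ ^ 2 := by
    intro x
    rw [key x]
    set ψ := ContinuousLinearMap.adjoint A x
    calc ⟪F ψ, ψ⟫ ≤ ‖F ψ‖ * ‖ψ‖ := real_inner_le_norm _ _
      _ ≤ (‖F‖ * ‖ψ‖) * ‖ψ‖ := by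
          have := F.le_opNorm ψ
          nlinarith [norm_nonneg ψ]
      _ = ‖F‖ * ‖ψ‖ ^ 2 := by ring
  apply Set.Subset.antisymm
  · -- range S ⊆ range A,  ‖S* x‖ = ‖S x‖ ≤ √‖F‖ ‖A* x‖
    refine range_subset_of_adjoint_norm_le A S (Real.sqrt ‖F‖) ?_
    intro x
    rw [hSadj]
    have h1 : ‖S x‖ = Real.sqrt (‖S x‖ ^ 2) := by
      rw [Real.sqrt_sq (norm_nonneg _)]
    rw [h1]
    calc Real.sqrt (‖S x‖ ^ 2) ≤ Real.sqrt (‖F‖ * ‖ContinuousLinearMap.adjoint A x‖ ^ 2) :=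
          Real.sqrt_le_sqrt (hupp x)
      _ = Real.sqrt ‖F‖ * ‖ContinuousLinearMap.adjoint A x‖ := by
          rw [Real.sqrt_mul (norm_nonneg _), Real.sqrt_sq (norm_nonneg _)]
  · -- range A ⊆ range S,  ‖A* x‖ ≤ (√c)⁻¹ ‖S* x‖
    refine range_subset_of_adjoint_norm_le S A (Real.sqrt c)⁻¹ ?_
    intro x
    rw [hSadj]
    have h2 : ‖ContinuousLinearMap.adjoint A x‖ ^ 2 ≤ c⁻¹ * ‖S x‖ ^ 2 := by
      have := hlow x
      rw [le_inv_mul_iff₀ hc]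
      linarith
    have h1 : ‖ContinuousLinearMap.adjoint A x‖
        = Real.sqrt (‖ContinuousLinearMap.adjoint A x‖ ^ 2) := by
      rw [Real.sqrt_sq (norm_nonneg _)]
    rw [h1]
    calc Real.sqrt (‖ContinuousLinearMap.adjoint A x‖ ^ 2)
        ≤ Real.sqrt (c⁻¹ * ‖S x‖ ^ 2) := Real.sqrt_le_sqrt h2
      _ = (Real.sqrt c)⁻¹ * ‖S x‖ := by
          rw [Real.sqrt_mul (by positivity), Real.sqrt_sq (norm_nonneg _), Real.sqrt_inv]
end

section
/- Abstract factorization-method theorem: Let H and K be real Hilbert spaces with H infinite-dimensional, let A : K → H be a compact linear operator whose adjoint A* : H → K is injective, and let F : K → K be a bounded self-adjoint coercive operator (there is c > 0 with ⟨Fψ, ψ⟩ ≥ c‖ψ‖² for all ψ ∈ K). Set N := A ∘ F ∘ A* : H → H, and suppose (ψₙ)ₙ∈ℕ is a Hilbert (orthonormal) basis of H consisting of eigenvectors of N with N ψₙ = λₙ ψₙ, λₙ > 0. Then for every g ∈ H, g belongs to the range of A if and only if the series Σₙ λₙ⁻¹ |⟨g, ψₙ⟩|² converges. (Abstract core of Theorem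 5.6 of the paper, with A playing the role of L′ composed with the Riesz isometry and N the symmetrized, modified Neumann-to-Dirichlet operator Ñ.) -/
open RealInnerProductSpace

/-- Abstract factorization-method theorem (abstract core of Theorem 5.6 of the paper):
for `N = A ∘ F ∘ A*` with `A` compact, `A*` injective and `F` self-adjoint coercive,
`g ∈ range A` iff `∑ λₙ⁻¹ |⟨g, ψₙ⟩|²` converges, where `(λₙ, ψₙ)` is an eigensystem
of `N`. -/
theorem stmt_10 {H K : Type*}
    [NormedAddCommGroup H] [InnerProductSpace ℝ H] [CompleteSpace H]
    [NormedAddCommGroup K] [InnerProductSpace ℝ K] [CompleteSpace K]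
    (hH : ¬ FiniteDimensional ℝ H)
    (A : K →L[ℝ] H)
    (hA_compact : IsCompactOperator A)
    (hA_inj : Function.Injective (ContinuousLinearMap.adjoint A))
    (F : K →L[ℝ] K)
    (hF_sa : ∀ x y : K, ⟪F x, y⟫ = ⟪x, F y⟫)
    (c : ℝ) (hc : 0 < c)
    (hF_coercive : ∀ ψ : K, c * ‖ψ‖ ^ 2 ≤ ⟪F ψ, ψ⟫)
    (ψ : HilbertBasis ℕ ℝ H) (lam : ℕ → ℝ)
    (h_eig : ∀ n : ℕ, (A.comp (F.comp (ContinuousLinearMap.adjoint A))) (ψ n) = lam n • ψ n)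
    (h_pos : ∀ n : ℕ, 0 < lam n) :
    ∀ g : H, g ∈ Set.range A ↔ Summable (fun n : ℕ => (lam n)⁻¹ * ⟪g, ψ n⟫ ^ 2) := by
  classical
  set u : ℕ → K := fun n => ContinuousLinearMap.adjoint A (ψ n) with hu
  have hAFu : ∀ n, A (F (u n)) = lam n • ψ n := by
    intro n
    have := h_eig n
    simpa [ContinuousLinearMap.comp_apply] using this
  have key : ∀ n m : ℕ, ⟪F (u n), u m⟫ = if n = m then lam n else 0 := by
    intro n m
    have h1 : ⟪F (u n), u m⟫ = ⟪A (F (u n)), ψ m⟫ := by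
      rw [hu]; rw [ContinuousLinearMap.adjoint_inner_right]
    rw [h1, hAFu n, inner_smul_left]
    have horth := orthonormal_iff_ite.mp ψ.orthonormal n m
    rw [horth]
    simp [mul_ite]
  -- quadratic form on finite combinations
  have hquad : ∀ (b : ℕ → ℝ) (s : Finset ℕ),
      ⟪F (∑ n ∈ s, b n • u n), ∑ n ∈ s, b n • u n⟫ = ∑ n ∈ s, lam n * (b n) ^ 2 := by
    intro b s
    rw [map_sum, sum_inner]
    refine Finset.sum_congr rfl fun n hn => ?_
    rw [map_smul, inner_sum]
    have hterm : ∀ m ∈ s, ⟪(b n • F (u n) : K), b m • u m⟫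
        = if m = n then lam n * b n ^ 2 else 0 := by
      intro m hm
      rw [real_inner_smul_left, real_inner_smul_right, key n m]
      by_cases h : n = m
      · subst h; simp; ring
      · simp [h, Ne.symm h]
    rw [Finset.sum_congr rfl hterm, Finset.sum_ite_eq' s n (fun _ => lam n * b n ^ 2)]
    simp [hn]
  intro g
  set a : ℕ → ℝ := fun n => (lam n)⁻¹ * ⟪g, ψ n⟫ with ha
  have hterm : ∀ n, lam n * (a n) ^ 2 = (lam n)⁻¹ * ⟪g, ψ n⟫ ^ 2 := by
    intro n
    have h0 : lam n ≠ 0 := (h_pos n).ne'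
    field_simp [ha]
    simp only [ha]; rw [mul_pow, inv_pow, ← mul_assoc, mul_inv_cancel₀ (pow_ne_zero 2 h0), one_mul]
  constructor
  · rintro ⟨φ, rfl⟩
    have hc' : ∀ n, ⟪A φ, ψ n⟫ = ⟪φ, u n⟫ := by
      intro n; rw [hu, ContinuousLinearMap.adjoint_inner_right]
    refine summable_of_sum_le (c := ‖φ‖ ^ 2 / c) (fun n => ?_) (fun s => ?_)
    · exact mul_nonneg (inv_nonneg.mpr (h_pos n).le) (sq_nonneg _)
    · -- partial sum bound : S ≤ ‖φ‖^2 / c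
      set w : K := ∑ n ∈ s, a n • u n with hw
      have hS : ∑ n ∈ s, (lam n)⁻¹ * ⟪A φ, ψ n⟫ ^ 2 = ⟪F w, w⟫ := by
        rw [hw, hquad a s]
        exact Finset.sum_congr rfl fun n _ => (hterm n).symm
      have hSφ : ⟪F w, w⟫ = ⟪φ, w⟫ := by
        have h1 : ⟪φ, w⟫ = ∑ n ∈ s, lam n * a n ^ 2 := by
          rw [hw, inner_sum]
          refine Finset.sum_congr rfl fun n hn => ?_
          rw [real_inner_smul_right, ← hc' n]
          simp only [ha]
          have h0 : lam n ≠ 0 := (h_pos n).ne'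
          field_simp
        rw [h1, hw, hquad a s]
      have hcw : c * ‖w‖ ^ 2 ≤ ⟪φ, w⟫ := hSφ ▸ hF_coercive w
      have hCS : ⟪φ, w⟫ ≤ ‖φ‖ * ‖w‖ := real_inner_le_norm φ w
      rw [hS, hSφ, le_div_iff₀ hc]
      nlinarith [norm_nonneg w, norm_nonneg φ, hcw, hCS, hc,
        sq_nonneg (‖φ‖ - c * ‖w‖)]
  · intro hsum
    -- the series ∑ a n • u n converges
    have hv : Summable (fun n => a n • u n) := by
      rw [summable_iff_vanishing_norm]
      intro ε hε
      obtain ⟨s, hs⟩ := summable_iff_vanishing_norm.mp hsum (c * ε ^ 2) (by positivity)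
      refine ⟨s, fun t ht => ?_⟩
      have h1 : c * ‖∑ n ∈ t, a n • u n‖ ^ 2 ≤ ∑ n ∈ t, (lam n)⁻¹ * ⟪g, ψ n⟫ ^ 2 := by
        calc c * ‖∑ n ∈ t, a n • u n‖ ^ 2 ≤ ⟪F (∑ n ∈ t, a n • u n), ∑ n ∈ t, a n • u n⟫ :=
              hF_coercive _
          _ = ∑ n ∈ t, lam n * (a n) ^ 2 := hquad a t
          _ = ∑ n ∈ t, (lam n)⁻¹ * ⟪g, ψ n⟫ ^ 2 := Finset.sum_congr rfl fun n _ => hterm n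
      have h2 : ∑ n ∈ t, (lam n)⁻¹ * ⟪g, ψ n⟫ ^ 2 < c * ε ^ 2 := by
        have := hs t ht
        calc ∑ n ∈ t, (lam n)⁻¹ * ⟪g, ψ n⟫ ^ 2
            ≤ ‖∑ n ∈ t, (lam n)⁻¹ * ⟪g, ψ n⟫ ^ 2‖ := le_abs_self _
          _ < c * ε ^ 2 := this
      have hx2 : ‖∑ n ∈ t, a n • u n‖ ^ 2 < ε ^ 2 :=
        lt_of_mul_lt_mul_left (lt_of_le_of_lt h1 h2) hc.le
      nlinarith [norm_nonneg (∑ n ∈ t, a n • u n), hε, hx2]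
    obtain ⟨χ, hχ⟩ := hv
    refine ⟨F χ, ?_⟩
    have hmap : HasSum (fun n => A (F (a n • u n))) (A (F χ)) := by
      have := hχ.mapL (A.comp F)
      simpa using this
    have hterm2 : ∀ n, A (F (a n • u n)) = ⟪g, ψ n⟫ • ψ n := by
      intro n
      rw [map_smul, map_smul, hAFu n, smul_smul]
      have h0 : lam n ≠ 0 := (h_pos n).ne'
      have : a n * lam n = ⟪g, ψ n⟫ := by
        simp only [ha]; field_simp
      rw [this]
    rw [funext hterm2] at hmap
    have hg : HasSum (fun n => ⟪g, ψ n⟫ • ψ n) g := by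
      have h := ψ.hasSum_repr g
      convert h using 2 with n
      rw [ψ.repr_apply_apply, real_inner_comm]
    exact hmap.unique hg
end
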